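/- arXiv:2210.11458 — 2 statements merged into one kernel-verified Lean document; each statement's English description precedes it below -/
import Mathlib

section
/- Every good 3-binary rooted tree is a caterpillar. That is, if T is a rooted tree whose root has degree exactly 3, all other vertices have degree 1 or 3, and diam(T) ≥ ℓ(T) − 1 (where ℓ(T) is the number of non-root leaves), then T consists of a path (y_0 … y_s) together with one pendant edge attached at each internal vertex y_1,…,y_{s−1} of the path. -/
/-- Degree of a vertex, as the cardinality of its neighbour set. -/
noncomputable def tdeg {V : Type*} (T : SimpleGraph V) (v : V) : ℕ :=
  (T.neighborSet v).ncard

/-- The number of non-root leaves of a rooted tree. -/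
noncomputable def nonRootLeaves {V : Type*} (T : SimpleGraph V) (r : V) : ℕ :=
  ({v : V | v ≠ r ∧ tdeg T v = 1}).ncard

private lemma tree_walk_length_eq_dist {V : Type*} {T : SimpleGraph V} (hT : T.IsTree)
    {a b : V} (p : T.Walk a b) (hp : p.IsPath) : p.length = T.dist a b := by
  obtain ⟨q, hq1, hq2⟩ := hT.isConnected.exists_path_of_dist a b
  obtain ⟨w, -, hw⟩ := hT.existsUnique_path a b
  rw [hw p hp, ← hw q hq1]
  exact hq2

/-- Every good 3-binary rooted tree (root of degree exactly 3, other
vertices of degree 1 or 3, diameter at least the number of non-root leaves minus 1) is a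
caterpillar: it consists of a path `y_0 … y_s` together with one pendant vertex `z_i`
attached at each internal vertex `y_i`, `1 ≤ i ≤ s−1`. -/
theorem stmt6 {V : Type*} [Fintype V] (T : SimpleGraph V) (hT : T.IsTree) (r : V)
    (hroot : tdeg T r = 3)
    (hdeg : ∀ v : V, v ≠ r → tdeg T v = 1 ∨ tdeg T v = 3)
    (hgood : nonRootLeaves T r - 1 ≤ T.diam) :
    ∃ (s : ℕ) (y z : ℕ → V),
      (∀ v : V, (∃ i ≤ s, v = y i) ∨ (∃ i, 1 ≤ i ∧ i ≤ s - 1 ∧ v = z i)) ∧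
      (∀ i j, i ≤ s → j ≤ s → y i = y j → i = j) ∧
      (∀ i j, 1 ≤ i → i ≤ s - 1 → 1 ≤ j → j ≤ s - 1 → z i = z j → i = j) ∧
      (∀ i j, i ≤ s → 1 ≤ j → j ≤ s - 1 → y i ≠ z j) ∧
      (∀ i, i < s → T.Adj (y i) (y (i + 1))) ∧
      (∀ i, 1 ≤ i → i ≤ s - 1 → T.Adj (y i) (z i)) := by
  classical
  have hconn := hT.isConnected
  haveI : Nonempty V := ⟨r⟩
  letI : DecidableRel T.Adj := fun a b => Classical.dec _
  have htdeg : ∀ v, tdeg T v = T.degree v := by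
    intro v
    rw [tdeg, ← SimpleGraph.card_neighborFinset_eq_degree, ← Set.ncard_coe_finset]
    congr 1
    simp [SimpleGraph.neighborFinset_def]
  have hd13 : ∀ w : V, T.degree w = 1 ∨ T.degree w = 3 := by
    intro w
    by_cases hw : w = r
    · right; rw [← htdeg, hw]; exact hroot
    · rcases hdeg w hw with h | h
      · left; rw [← htdeg]; exact h
      · right; rw [← htdeg]; exact h
  -- counting leaves vs degree-3 vertices
  set B : Finset V := Finset.univ.filter (fun w => T.degree w = 3) with hB
  set A : Finset V := Finset.univ.filter (fun w => T.degree w = 1) with hA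
  have hABdisj : Disjoint A B := by
    rw [Finset.disjoint_left]
    intro a ha hb
    rw [hA, Finset.mem_filter] at ha
    rw [hB, Finset.mem_filter] at hb
    omega
  have hABunion : A ∪ B = Finset.univ := by
    ext w
    simp only [Finset.mem_union, hA, hB, Finset.mem_filter, Finset.mem_univ, true_and]
    simpa using hd13 w
  have hn : A.card + B.card = Fintype.card V := by
    rw [← Finset.card_union_of_disjoint hABdisj, hABunion, Finset.card_univ]
  have hsum : ∑ w, T.degree w = 2 * T.edgeFinset.card := T.sum_degrees_eq_twice_card_edges
  have hedge : T.edgeFinset.card + 1 = Fintype.card V := hT.card_edgeFinset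
  have hsplit : ∑ w, T.degree w = A.card * 1 + B.card * 3 := by
    rw [← hABunion, Finset.sum_union hABdisj]
    congr 1
    · exact Finset.sum_const_nat (fun x hx => by rw [hA, Finset.mem_filter] at hx; exact hx.2)
    · exact Finset.sum_const_nat (fun x hx => by rw [hB, Finset.mem_filter] at hx; exact hx.2)
  have hAk : A.card = B.card + 2 := by omega
  have hL : nonRootLeaves T r = A.card := by
    rw [nonRootLeaves]
    have hset : {v : V | v ≠ r ∧ tdeg T v = 1} = ↑A := by
      ext w
      simp only [Set.mem_setOf_eq, hA, Finset.coe_filter, Finset.mem_univ, true_and, htdeg]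
      constructor
      · rintro ⟨-, h⟩; exact h
      · intro h
        refine ⟨?_, h⟩
        rintro rfl
        rw [← htdeg, hroot] at h
        omega
    rw [hset, Set.ncard_coe_finset]
  have hrB : r ∈ B := by
    rw [hB, Finset.mem_filter]
    exact ⟨Finset.mem_univ r, by rw [← htdeg]; exact hroot⟩
  -- diametral path
  obtain ⟨u, v, huv⟩ := T.exists_dist_eq_diam
  obtain ⟨p, hp, -⟩ := hT.existsUnique_path u v
  set d := T.diam with hd
  have hpl : p.length = d := by rw [tree_walk_length_eq_dist hT p hp, huv]
  set y : ℕ → V := fun i => p.getVert i with hy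
  have hetop : T.ediam ≠ ⊤ := by
    obtain ⟨a, b, hab⟩ := T.exists_edist_eq_ediam_of_finite
    rw [← hab]
    exact SimpleGraph.edist_ne_top_iff_reachable.mpr (hconn a b)
  have hdle : ∀ a b : V, T.dist a b ≤ d := fun a b => SimpleGraph.dist_le_diam hetop
  -- generic upper bound along a walk
  have hub : ∀ (a b : V) (q : T.Walk a b) (i k : ℕ),
      T.dist (q.getVert i) (q.getVert (i + k)) ≤ k := by
    intro a b q i k
    induction k with
    | zero => simp [SimpleGraph.dist_self]
    | succ k ih =>
      by_cases h : i + k < q.length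
      · have hadj := q.adj_getVert_succ h
        have h1 : T.dist (q.getVert (i + k)) (q.getVert (i + k + 1)) = 1 :=
          SimpleGraph.dist_eq_one_iff_adj.mpr hadj
        have h2 := hconn.dist_triangle (u := q.getVert i) (v := q.getVert (i + k))
          (w := q.getVert (i + k + 1))
        have h3 : i + (k + 1) = i + k + 1 := by omega
        rw [h3]
        omega
      · have h1 : q.getVert (i + (k + 1)) = q.getVert (i + k) := by
          rw [q.getVert_of_length_le (by omega), q.getVert_of_length_le (by omega)]
        rw [h1]
        omega
  -- distances along a diametral path
  have hqdist : ∀ (a b : V) (q : T.Walk a b), q.IsPath → q.length = d →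
      ∀ i j, i ≤ j → j ≤ d → T.dist (q.getVert i) (q.getVert j) = j - i := by
    intro a b q hq hql i j hij hjd
    have hdab : T.dist a b = d := by rw [← tree_walk_length_eq_dist hT q hq, hql]
    have h1 : T.dist (q.getVert i) (q.getVert j) ≤ j - i := by
      have h := hub a b q i (j - i)
      rwa [show i + (j - i) = j by omega] at h
    have h2 : T.dist a (q.getVert i) ≤ i := by
      have := hub a b q 0 i
      rwa [Nat.zero_add, q.getVert_zero] at this
    have h3 : T.dist (q.getVert j) b ≤ d - j := by
      have h := hub a b q j (d - j)
      have hvd : q.getVert d = b := by rw [← hql]; exact q.getVert_length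
      rwa [show j + (d - j) = d by omega, hvd] at h
    have h4 : T.dist a b ≤ T.dist a (q.getVert i) +
        (T.dist (q.getVert i) (q.getVert j) + T.dist (q.getVert j) b) := by
      calc T.dist a b ≤ T.dist a (q.getVert i) + T.dist (q.getVert i) b :=
            hconn.dist_triangle
        _ ≤ _ := by
            have := hconn.dist_triangle (u := q.getVert i) (v := q.getVert j) (w := b)
            omega
    omega
  have hdist : ∀ i j, i ≤ j → j ≤ d → T.dist (y i) (y j) = j - i :=
    fun i j hij hjd => hqdist u v p hp hpl i j hij hjd
  have hyne : ∀ a b, a < b → b ≤ d → y a ≠ y b := by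
    intro a b hab hbd h
    have := hdist a b hab.le hbd
    rw [h, SimpleGraph.dist_self] at this
    omega
  have hyinj : ∀ i j, i ≤ d → j ≤ d → y i = y j → i = j := by
    intro i j hi hj he
    rcases lt_trichotomy i j with h | h | h
    · exact absurd he (hyne i j h hj)
    · exact h
    · exact absurd he.symm (hyne j i h hi)
  have hadjy : ∀ i, i < d → T.Adj (y i) (y (i + 1)) := by
    intro i hi
    exact p.adj_getVert_succ (by omega)
  have hsupp : ∀ w, w ∈ p.support ↔ ∃ i, i ≤ d ∧ y i = w := by
    intro w
    rw [SimpleGraph.Walk.mem_support_iff_exists_getVert]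
    constructor
    · rintro ⟨n, h1, h2⟩; exact ⟨n, by omega, h1⟩
    · rintro ⟨n, h1, h2⟩; exact ⟨n, h2, by omega⟩
  have hysupp : ∀ i, i ≤ d → y i ∈ p.support := fun i hi => (hsupp _).mpr ⟨i, hi, rfl⟩
  have hd1 : 1 ≤ d := by
    have h := hgood
    rw [hL, hAk] at h
    omega
  -- interior vertices have degree 3
  have hint : ∀ i, 1 ≤ i → i ≤ d - 1 → T.degree (y i) = 3 := by
    intro i h1 h2
    have hne : y (i - 1) ≠ y (i + 1) := by
      intro h
      have := hyinj (i - 1) (i + 1) (by omega) (by omega) h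
      omega
    have ha1 : T.Adj (y i) (y (i - 1)) := by
      have := hadjy (i - 1) (by omega)
      rw [show i - 1 + 1 = i from by omega] at this
      exact this.symm
    have ha2 : T.Adj (y i) (y (i + 1)) := hadjy i (by omega)
    have hsub : ({y (i - 1), y (i + 1)} : Finset V) ⊆ T.neighborFinset (y i) := by
      intro w hw
      simp only [Finset.mem_insert, Finset.mem_singleton] at hw
      rcases hw with h | h <;> subst h <;> rw [SimpleGraph.mem_neighborFinset]
      · exact ha1
      · exact ha2
    have hcard2 : 2 ≤ T.degree (y i) := by
      have hc := Finset.card_le_card hsub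
      rw [Finset.card_insert_of_notMem (by simpa using hne), Finset.card_singleton,
        SimpleGraph.card_neighborFinset_eq_degree] at hc
      exact hc
    rcases hd13 (y i) with h | h
    · omega
    · exact h
  -- endpoints of a diametral path are leaves
  have hend : ∀ (a b : V) (q : T.Walk a b), q.IsPath → q.length = d → T.degree a = 1 := by
    intro a b q hq hql
    rcases hd13 a with h1 | h3
    · exact h1
    exfalso
    have hadj1 : T.Adj a (q.getVert 1) := by
      have := q.adj_getVert_succ (i := 0) (by omega)
      rwa [q.getVert_zero] at this
    have hcard : 1 < (T.neighborFinset a).card := by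
      rw [SimpleGraph.card_neighborFinset_eq_degree, h3]; omega
    obtain ⟨w, hwmem, hwne⟩ := Finset.exists_mem_ne hcard (q.getVert 1)
    have hadjw : T.Adj a w := (SimpleGraph.mem_neighborFinset _ _ _).mp hwmem
    have hwns : w ∉ q.support := by
      intro hmem
      rw [SimpleGraph.Walk.mem_support_iff_exists_getVert] at hmem
      obtain ⟨n, hn1, hn2⟩ := hmem
      have hdw : T.dist (q.getVert 0) (q.getVert n) = n :=
        hqdist a b q hq hql 0 n (by omega) (by omega)
      rw [q.getVert_zero, hn1] at hdw
      have : T.dist a w = 1 := SimpleGraph.dist_eq_one_iff_adj.mpr hadjw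
      have hn1' : n = 1 := by omega
      exact hwne (by rw [← hn1, hn1'])
    have hq' : (SimpleGraph.Walk.cons hadjw.symm q).IsPath := hq.cons hwns
    have := tree_walk_length_eq_dist hT _ hq'
    rw [SimpleGraph.Walk.length_cons, hql] at this
    have := hdle w b
    omega
  have hdegu : T.degree u = 1 := hend u v p hp hpl
  have hdegv : T.degree v = 1 := hend v u p.reverse hp.reverse (by
    rw [SimpleGraph.Walk.length_reverse, hpl])
  -- counting: d = B.card + 1 and every degree-3 vertex is an interior path vertex
  have hIsub : (Finset.Icc 1 (d - 1)).image y ⊆ B := by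
    intro w hw
    rw [Finset.mem_image] at hw
    obtain ⟨i, hi, rfl⟩ := hw
    rw [Finset.mem_Icc] at hi
    rw [hB, Finset.mem_filter]
    exact ⟨Finset.mem_univ _, hint i hi.1 hi.2⟩
  have hIcard : ((Finset.Icc 1 (d - 1)).image y).card = d - 1 := by
    rw [Finset.card_image_of_injOn, Nat.card_Icc]
    · omega
    · intro i hi j hj hij
      rw [Finset.coe_Icc, Set.mem_Icc] at hi hj
      exact hyinj i j (by omega) (by omega) hij
  have hk1 : d - 1 ≤ B.card := hIcard ▸ Finset.card_le_card hIsub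
  have hk2 : B.card + 1 ≤ d := by
    have h := hgood
    rw [hL, hAk] at h
    omega
  have hBeq : B = (Finset.Icc 1 (d - 1)).image y :=
    (Finset.eq_of_subset_of_card_le hIsub (by omega)).symm
  have hBy : ∀ w, T.degree w = 3 → ∃ i, 1 ≤ i ∧ i ≤ d - 1 ∧ y i = w := by
    intro w hw
    have hwB : w ∈ B := by rw [hB, Finset.mem_filter]; exact ⟨Finset.mem_univ _, hw⟩
    rw [hBeq, Finset.mem_image] at hwB
    obtain ⟨i, hi, he⟩ := hwB
    rw [Finset.mem_Icc] at hi
    exact ⟨i, hi.1, hi.2, he⟩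
  -- choose pendant vertices
  have hzex : ∀ i, 1 ≤ i → i ≤ d - 1 → ∃ w, T.Adj (y i) w ∧ w ∉ p.support := by
    intro i h1 h2
    have hcard : (T.neighborFinset (y i)).card = 3 := by
      rw [SimpleGraph.card_neighborFinset_eq_degree]; exact hint i h1 h2
    have hpair : ({y (i - 1), y (i + 1)} : Finset V).card ≤ 2 :=
      Finset.card_insert_le _ _ |>.trans (by simp)
    have hsd : 1 ≤ (T.neighborFinset (y i) \ {y (i - 1), y (i + 1)}).card := by
      have := Finset.le_card_sdiff ({y (i - 1), y (i + 1)} : Finset V) (T.neighborFinset (y i))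
      omega
    obtain ⟨w, hw⟩ := Finset.card_pos.mp
      (show 0 < (T.neighborFinset (y i) \ {y (i - 1), y (i + 1)}).card from by omega)
    rw [Finset.mem_sdiff, Finset.mem_insert, Finset.mem_singleton] at hw
    obtain ⟨hwN, hwne⟩ := hw
    push_neg at hwne
    refine ⟨w, (SimpleGraph.mem_neighborFinset _ _ _).mp hwN, ?_⟩
    intro hmem
    obtain ⟨n, hn, hyn⟩ := (hsupp w).mp hmem
    have hadj : T.Adj (y i) (y n) := by rw [hyn]; exact (SimpleGraph.mem_neighborFinset _ _ _).mp hwN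
    rcases le_or_gt i n with h | h
    · have := hdist i n h hn
      rw [SimpleGraph.dist_eq_one_iff_adj.mpr hadj] at this
      exact hwne.2 (by rw [← hyn]; congr 1; omega)
    · have := hdist n i h.le (by omega)
      rw [SimpleGraph.dist_comm, SimpleGraph.dist_eq_one_iff_adj.mpr hadj] at this
      exact hwne.1 (by rw [← hyn]; congr 1; omega)
  set z : ℕ → V := fun i =>
    if h : 1 ≤ i ∧ i ≤ d - 1 then Classical.choose (hzex i h.1 h.2) else u with hzdef
  have hzadj : ∀ i, 1 ≤ i → i ≤ d - 1 → T.Adj (y i) (z i) ∧ z i ∉ p.support := by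
    intro i h1 h2
    have : z i = Classical.choose (hzex i h1 h2) := by
      rw [hzdef]; simp only [dif_pos (And.intro h1 h2)]
    rw [this]
    exact Classical.choose_spec (hzex i h1 h2)
  -- neighbours of interior path vertices
  have hNset : ∀ i, 1 ≤ i → i ≤ d - 1 →
      T.neighborFinset (y i) = {y (i - 1), y (i + 1), z i} := by
    intro i h1 h2
    have hz := hzadj i h1 h2
    have hne1 : y (i - 1) ≠ y (i + 1) := by
      intro h
      have := hyinj (i - 1) (i + 1) (by omega) (by omega) h
      omega
    have hne2 : y (i - 1) ≠ z i := fun h => hz.2 (h ▸ hysupp (i - 1) (by omega))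
    have hne3 : y (i + 1) ≠ z i := fun h => hz.2 (h ▸ hysupp (i + 1) (by omega))
    have ha1 : T.Adj (y i) (y (i - 1)) := by
      have := hadjy (i - 1) (by omega)
      rw [show i - 1 + 1 = i from by omega] at this
      exact this.symm
    have ha2 : T.Adj (y i) (y (i + 1)) := hadjy i (by omega)
    have hsub : ({y (i - 1), y (i + 1), z i} : Finset V) ⊆ T.neighborFinset (y i) := by
      intro w hw
      simp only [Finset.mem_insert, Finset.mem_singleton] at hw
      rcases hw with h | h | h <;> subst h <;> rw [SimpleGraph.mem_neighborFinset]
      · exact ha1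
      · exact ha2
      · exact hz.1
    have hcard3 : ({y (i - 1), y (i + 1), z i} : Finset V).card = 3 := by
      rw [Finset.card_insert_of_notMem (by simp [hne1, hne2]),
        Finset.card_insert_of_notMem (by simp [hne3]), Finset.card_singleton]
    refine (Finset.eq_of_subset_of_card_le hsub ?_).symm
    rw [SimpleGraph.card_neighborFinset_eq_degree, hint i h1 h2, hcard3]
  -- pendant vertices are leaves with unique neighbour
  have hzleaf : ∀ i, 1 ≤ i → i ≤ d - 1 → T.neighborFinset (z i) = {y i} := by
    intro i h1 h2
    have hz := hzadj i h1 h2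
    have h1deg : T.degree (z i) = 1 := by
      rcases hd13 (z i) with h | h
      · exact h
      · exfalso
        obtain ⟨j, hj1, hj2, hj3⟩ := hBy _ h
        exact hz.2 (hj3 ▸ hysupp j (by omega))
    obtain ⟨a, ha⟩ := Finset.card_eq_one.mp
      (show (T.neighborFinset (z i)).card = 1 from by
        rw [SimpleGraph.card_neighborFinset_eq_degree]; exact h1deg)
    have hy_in : y i ∈ T.neighborFinset (z i) :=
      (SimpleGraph.mem_neighborFinset _ _ _).mpr hz.1.symm
    rw [ha] at hy_in ⊢
    rw [Finset.mem_singleton] at hy_in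
    rw [hy_in]
  -- coverage
  have hcover : ∀ w : V, (∃ i, i ≤ d ∧ w = y i) ∨ (∃ i, 1 ≤ i ∧ i ≤ d - 1 ∧ w = z i) := by
    intro w
    by_cases hws : w ∈ p.support
    · left
      obtain ⟨i, hi, he⟩ := (hsupp w).mp hws
      exact ⟨i, hi, he.symm⟩
    · right
      have hw1 : T.degree w = 1 := by
        rcases hd13 w with h | h
        · exact h
        · exfalso
          obtain ⟨j, hj1, hj2, hj3⟩ := hBy w h
          exact hws (hj3 ▸ hysupp j (by omega))
      obtain ⟨x, hx⟩ := Finset.card_eq_one.mp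
        (show (T.neighborFinset w).card = 1 from by
          rw [SimpleGraph.card_neighborFinset_eq_degree]; exact hw1)
      have hadjwx : T.Adj w x := by
        have : x ∈ T.neighborFinset w := by rw [hx]; exact Finset.mem_singleton_self x
        exact (SimpleGraph.mem_neighborFinset _ _ _).mp this
      have hwr : w ≠ r := by
        intro h
        rw [h, ← htdeg, hroot] at hw1
        omega
      have hx3 : T.degree x = 3 := by
        rcases hd13 x with h1 | h3
        · exfalso
          obtain ⟨q, hq, -⟩ := hT.existsUnique_path w r
          cases q with
          | nil => exact hwr rfl
          | cons ha qtail =>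
            rename_i c
            have hc : c = x := by
              have : c ∈ T.neighborFinset w := (SimpleGraph.mem_neighborFinset _ _ _).mpr ha
              rw [hx, Finset.mem_singleton] at this
              exact this
            subst hc
            cases qtail with
            | nil =>
              rw [← htdeg, hroot] at h1
              omega
            | cons hb qtail2 =>
              rename_i c2
              have hxw : T.neighborFinset c = {w} := by
                obtain ⟨a', ha'⟩ := Finset.card_eq_one.mp
                  (show (T.neighborFinset c).card = 1 from by
                    rw [SimpleGraph.card_neighborFinset_eq_degree]; exact h1)
                have hw_in : w ∈ T.neighborFinset c :=
                  (SimpleGraph.mem_neighborFinset _ _ _).mpr hadjwx.symm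
                rw [ha'] at hw_in ⊢
                rw [Finset.mem_singleton] at hw_in
                rw [hw_in]
              have hc2 : c2 = w := by
                have : c2 ∈ T.neighborFinset c := (SimpleGraph.mem_neighborFinset _ _ _).mpr hb
                rw [hxw, Finset.mem_singleton] at this
                exact this
              rw [SimpleGraph.Walk.cons_isPath_iff] at hq
              apply hq.2
              rw [SimpleGraph.Walk.support_cons]
              right
              rw [← hc2]
              exact qtail2.start_mem_support
        · exact h3
      obtain ⟨i, hi1, hi2, hi3⟩ := hBy x hx3
      refine ⟨i, hi1, hi2, ?_⟩
      have hwN : w ∈ T.neighborFinset (y i) := by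
        rw [SimpleGraph.mem_neighborFinset, hi3]
        exact hadjwx.symm
      rw [hNset i hi1 hi2, Finset.mem_insert, Finset.mem_insert, Finset.mem_singleton] at hwN
      rcases hwN with h | h | h
      · exact absurd (h ▸ hysupp (i - 1) (by omega)) hws
      · exact absurd (h ▸ hysupp (i + 1) (by omega)) hws
      · exact h
  -- assemble
  refine ⟨d, y, z, ?_, hyinj, ?_, ?_, hadjy, fun i h1 h2 => (hzadj i h1 h2).1⟩
  · intro w
    rcases hcover w with ⟨i, hi, he⟩ | ⟨i, hi1, hi2, he⟩
    · exact Or.inl ⟨i, hi, he⟩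
    · exact Or.inr ⟨i, hi1, hi2, he⟩
  · intro i j hi1 hi2 hj1 hj2 he
    have h1 := hzleaf i hi1 hi2
    have h2 := hzleaf j hj1 hj2
    rw [he, h2] at h1
    have : y j = y i := by
      have := Finset.mem_singleton_self (y j)
      rw [h1, Finset.mem_singleton] at this
      exact this
    exact (hyinj j i (by omega) (by omega) this).symm
  · intro i j hi hj1 hj2 he
    exact (hzadj j hj1 hj2).2 (he ▸ hysupp i hi)
end

section
/- Let X_1, …, X_n be independent random variables with X_i taking values in a finite set A_i, let c > 0, and let f : A_1 × ⋯ × A_n → ℝ satisfy |f(x) − f(x')| ≤ c whenever x and x' differ in exactly one coordinate. Then for every m ≥ 0, Pr(f(X) − E[f(X)] ≥ m) ≤ 2·exp(−2m²/(c²·n)). -/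
open MeasureTheory ProbabilityTheory Real Finset

/-- Core analytic inequality for Hoeffding's lemma. -/
lemma hoeffding_core {p : ℝ} (hp0 : 0 ≤ p) (hp1 : p ≤ 1) (h : ℝ) :
    1 - p + p * exp h ≤ exp (p * h + h ^ 2 / 8) := by
  -- D x > 0
  have hD : ∀ x : ℝ, 0 < 1 - p + p * exp x := by
    intro x
    rcases lt_or_eq_of_le hp1 with h1 | h1
    · have : 0 ≤ p * exp x := mul_nonneg hp0 (exp_pos x).le
      linarith
    · subst h1; simpa using exp_pos x
  set q : ℝ → ℝ := fun x => p * exp x / (1 - p + p * exp x) with hq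
  have hq0 : ∀ x, 0 ≤ q x := fun x =>
    div_nonneg (mul_nonneg hp0 (exp_pos x).le) (hD x).le
  have hq1 : ∀ x, q x ≤ 1 := by
    intro x
    rw [hq]
    exact div_le_one_of_le₀ (by linarith) (hD x).le
  -- derivative of D
  have hDd : ∀ x : ℝ, HasDerivAt (fun x => 1 - p + p * exp x) (p * exp x) x := by
    intro x
    simpa using ((Real.hasDerivAt_exp x).const_mul p).const_add (1 - p)
  -- derivative of q
  have hqd : ∀ x : ℝ, HasDerivAt q (q x - q x ^ 2) x := by
    intro x
    have key : ∀ a D : ℝ, D ≠ 0 → (a * D - a * a) / D ^ 2 = a / D - (a / D) ^ 2 := by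
      intros a D hne; field_simp
    have := ((Real.hasDerivAt_exp x).const_mul p).div (hDd x) (hD x).ne'
    rw [key _ _ (hD x).ne'] at this
    exact this
  -- G = derivative of F
  set G : ℝ → ℝ := fun x => p + x / 4 - q x with hG
  have hGd : ∀ x : ℝ, HasDerivAt G (1 / 4 - (q x - q x ^ 2)) x := by
    intro x
    have h1 : HasDerivAt (fun x : ℝ => p + x / 4) (1 / 4) x := by
      simpa using ((hasDerivAt_id x).div_const 4).const_add p
    exact h1.sub (hqd x)
  have hGmono : Monotone G := by
    have hdiff : Differentiable ℝ G := fun x => (hGd x).differentiableAt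
    refine monotone_of_deriv_nonneg hdiff ?_
    intro x
    rw [(hGd x).deriv]
    nlinarith [sq_nonneg (2 * q x - 1), hq0 x, hq1 x]
  have hG0 : G 0 = 0 := by simp [hG, hq, hD]
  -- F
  set F : ℝ → ℝ := fun x => p * x + x ^ 2 / 8 - log (1 - p + p * exp x) with hF
  have hFd : ∀ x : ℝ, HasDerivAt F (G x) x := by
    intro x
    have h1 : HasDerivAt (fun x : ℝ => p * x + x ^ 2 / 8) (p + x / 4) x := by
      have h2 : HasDerivAt (fun y : ℝ => p * y) p x := by
        simpa using (hasDerivAt_id x).const_mul p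
      have h3 := (hasDerivAt_pow 2 x).div_const 8
      have h4 := h2.add h3
      exact h4.congr_deriv (by norm_num; ring)
    have h2 : HasDerivAt (fun x => log (1 - p + p * exp x)) (p * exp x / (1 - p + p * exp x)) x :=
      (hDd x).log (hD x).ne'
    have h3 : p + x / 4 = p + 2 * x ^ 1 / 8 := by ring
    rw [hG]
    exact h1.sub h2
  have hF0 : F 0 = 0 := by simp [hF]
  have hFnonneg : 0 ≤ F h := by
    have hdiffF : Differentiable ℝ F := fun x => (hFd x).differentiableAt
    rcases le_or_gt 0 h with hh | hh
    · have := monotoneOn_of_deriv_nonneg (convex_Ici (0:ℝ)) hdiffF.continuous.continuousOn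
        hdiffF.differentiableOn ?_ (Set.self_mem_Ici) (Set.mem_Ici.2 hh) hh
      · rw [hF0] at this; exact this
      · intro x hx
        rw [(hFd x).deriv, ← hG0]
        exact hGmono (le_of_lt (by simpa using hx))
    · have := antitoneOn_of_deriv_nonpos (convex_Iic (0:ℝ)) hdiffF.continuous.continuousOn
        hdiffF.differentiableOn ?_ (Set.mem_Iic.2 hh.le) (Set.self_mem_Iic) hh.le
      · rw [hF0] at this; exact this
      · intro x hx
        rw [(hFd x).deriv, ← hG0]
        exact hGmono (le_of_lt (by simpa using hx))
  -- conclude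
  have := hFnonneg
  rw [hF] at this
  have hlog : log (1 - p + p * exp h) ≤ p * h + h ^ 2 / 8 := by linarith
  calc 1 - p + p * exp h = exp (log (1 - p + p * exp h)) := (exp_log (hD h)).symm
    _ ≤ exp (p * h + h ^ 2 / 8) := exp_le_exp.2 hlog

/-- Hoeffding's lemma on a finite weighted space. -/
lemma hoeffding_fin' {α : Type*} [Fintype α] (q : α → ℝ) (hq0 : ∀ a, 0 ≤ q a)
    (hq1 : ∑ a, q a = 1) (g : α → ℝ) (hg : ∑ a, q a * g a = 0) (c t : ℝ)
    (hrange : ∀ a b, g a - g b ≤ c) :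
    ∑ a, q a * exp (t * g a) ≤ exp (t ^ 2 * c ^ 2 / 8) := by
  have hne : Nonempty α := by
    by_contra hem
    rw [not_nonempty_iff] at hem
    rw [Finset.univ_eq_empty, Finset.sum_empty] at hq1
    exact one_ne_zero hq1.symm
  obtain ⟨a0, -, ha0⟩ := Finset.exists_min_image univ g ⟨Classical.arbitrary α, mem_univ _⟩
  obtain ⟨b0, -, hb0⟩ := Finset.exists_max_image univ g ⟨Classical.arbitrary α, mem_univ _⟩
  set a := g a0
  set b := g b0
  have hab : ∀ x, a ≤ g x ∧ g x ≤ b := fun x => ⟨ha0 x (mem_univ x), hb0 x (mem_univ x)⟩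
  have ha : a ≤ 0 := by
    have h1 : ∑ x, q x * a ≤ ∑ x, q x * g x :=
      Finset.sum_le_sum fun x _ => mul_le_mul_of_nonneg_left (hab x).1 (hq0 x)
    rw [hg, ← Finset.sum_mul, hq1, one_mul] at h1
    exact h1
  have hb : 0 ≤ b := by
    have h1 : ∑ x, q x * g x ≤ ∑ x, q x * b :=
      Finset.sum_le_sum fun x _ => mul_le_mul_of_nonneg_left (hab x).2 (hq0 x)
    rw [hg, ← Finset.sum_mul, hq1, one_mul] at h1
    exact h1
  have hbac : b - a ≤ c := hrange b0 a0
  have hrhs0 : (0:ℝ) ≤ t ^ 2 * c ^ 2 / 8 := by positivity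
  rcases eq_or_lt_of_le (le_trans ha hb) with hab0 | hlt
  · -- a = b, so g is constant and hence zero
    have hg0 : ∀ x, g x = a := fun x =>
      le_antisymm ((hab x).2.trans_eq hab0.symm) (hab x).1
    have ha0' : a = 0 := by
      have h1 : a = ∑ x, q x * g x := by
        simp only [hg0]
        rw [← Finset.sum_mul, hq1, one_mul]
      rw [hg] at h1; exact h1
    have hone : ∀ x, exp (t * g x) = 1 := fun x => by
      rw [hg0 x, ha0', mul_zero, exp_zero]
    calc ∑ x, q x * exp (t * g x) = ∑ x, q x :=
          Finset.sum_congr rfl fun x _ => by rw [hone x, mul_one]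
      _ = 1 := hq1
      _ = exp 0 := exp_zero.symm
      _ ≤ exp (t ^ 2 * c ^ 2 / 8) := exp_le_exp.2 hrhs0
  · -- a < b
    set p : ℝ := -a / (b - a) with hp
    have hba : 0 < b - a := sub_pos.2 hlt
    have hp0 : 0 ≤ p := div_nonneg (by linarith) hba.le
    have hp1 : p ≤ 1 := by
      rw [div_le_one hba]; linarith
    -- convexity pointwise
    have hconv : ∀ x, exp (t * g x) ≤
        ((b - g x) * exp (t * a) + (g x - a) * exp (t * b)) / (b - a) := by
      intro x
      have w1 : (0:ℝ) ≤ (b - g x) / (b - a) := div_nonneg (by linarith [(hab x).2]) hba.le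
      have w2 : (0:ℝ) ≤ (g x - a) / (b - a) := div_nonneg (by linarith [(hab x).1]) hba.le
      have wsum : (b - g x) / (b - a) + (g x - a) / (b - a) = 1 := by
        field_simp
        ring
      have hcx := convexOn_exp.2 (Set.mem_univ (t * a)) (Set.mem_univ (t * b)) w1 w2 wsum
      simp only [smul_eq_mul] at hcx
      have harg : (b - g x) / (b - a) * (t * a) + (g x - a) / (b - a) * (t * b) = t * g x := by
        field_simp
        ring
      rw [harg] at hcx
      calc exp (t * g x) ≤ (b - g x) / (b - a) * exp (t * a) + (g x - a) / (b - a) * exp (t * b) := hcx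
        _ = ((b - g x) * exp (t * a) + (g x - a) * exp (t * b)) / (b - a) := by ring
    have hsum : ∑ x, q x * exp (t * g x) ≤ (b * exp (t * a) - a * exp (t * b)) / (b - a) := by
      calc ∑ x, q x * exp (t * g x)
          ≤ ∑ x, q x * (((b - g x) * exp (t * a) + (g x - a) * exp (t * b)) / (b - a)) :=
            Finset.sum_le_sum fun x _ => mul_le_mul_of_nonneg_left (hconv x) (hq0 x)
        _ = ((∑ x, q x * (b - g x)) * exp (t * a) + (∑ x, q x * (g x - a)) * exp (t * b)) / (b - a) := by
            rw [Finset.sum_mul, Finset.sum_mul, ← Finset.sum_add_distrib, Finset.sum_div]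
            congr 1; ext x; ring
        _ = (b * exp (t * a) - a * exp (t * b)) / (b - a) := by
            have h1 : ∑ x, q x * (b - g x) = b := by
              simp only [mul_sub]
              rw [Finset.sum_sub_distrib, ← Finset.sum_mul, hq1, hg]; ring
            have h2 : ∑ x, q x * (g x - a) = -a := by
              simp only [mul_sub]
              rw [Finset.sum_sub_distrib, hg, ← Finset.sum_mul, hq1]; ring
            rw [h1, h2]; ring
    -- key identity and hoeffding_core
    set h' : ℝ := t * (b - a) with hh'
    have hta : t * a = -(p * h') := by
      rw [hp, hh']; field_simp
    have hid : (b * exp (t * a) - a * exp (t * b)) / (b - a)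
        = exp (-(p * h')) * (1 - p + p * exp h') := by
      have htb : t * b = -(p * h') + h' := by rw [hp, hh']; field_simp; ring
      rw [hta, htb, exp_add]
      rw [hp]
      field_simp
      ring
    have hcore := hoeffding_core hp0 hp1 h'
    have hfinal : (b * exp (t * a) - a * exp (t * b)) / (b - a) ≤ exp (h' ^ 2 / 8) := by
      rw [hid]
      calc exp (-(p * h')) * (1 - p + p * exp h')
          ≤ exp (-(p * h')) * exp (p * h' + h' ^ 2 / 8) :=
            mul_le_mul_of_nonneg_left hcore (exp_pos _).le
        _ = exp (h' ^ 2 / 8) := by rw [← exp_add]; ring_nf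
    have hexp : exp (h' ^ 2 / 8) ≤ exp (t ^ 2 * c ^ 2 / 8) := by
      apply exp_le_exp.2
      rw [hh']
      have : (t * (b - a)) ^ 2 ≤ t ^ 2 * c ^ 2 := by
        rw [mul_pow]
        exact mul_le_mul_of_nonneg_left (pow_le_pow_left₀ hba.le hbac 2) (sq_nonneg t)
      linarith
    exact hsum.trans (hfinal.trans hexp)

/-- MGF bound for functions of independent finite variables (McDiarmid core). -/
lemma mcdiarmid_mgf' (n : ℕ) : ∀ {A : Fin n → Type*} [inst : ∀ i, Fintype (A i)]
    (p : ∀ i, A i → ℝ) (_hp0 : ∀ i a, 0 ≤ p i a) (_hp1 : ∀ i, ∑ a, p i a = 1)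
    (f : (∀ i, A i) → ℝ) (c : ℝ)
    (_hf : ∀ (x x' : ∀ i, A i) (i : Fin n), (∀ j, j ≠ i → x j = x' j) → |f x - f x'| ≤ c)
    (t : ℝ),
    ∑ x, (∏ i, p i (x i)) * exp (t * (f x - ∑ y, (∏ i, p i (y i)) * f y))
      ≤ exp (t ^ 2 * c ^ 2 * n / 8) := by
  induction n with
  | zero =>
    intro A inst p hp0 hp1 f c hf t
    have hu : (Finset.univ : Finset (∀ i : Fin 0, A i)) = {fun i => i.elim0} := by
      refine Finset.eq_singleton_iff_unique_mem.2 ⟨mem_univ _, fun y _ => ?_⟩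
      exact funext fun i => i.elim0
    rw [hu]
    simp
  | succ n ih =>
    intro A inst p hp0 hp1 f c hf t
    have hre : ∀ F : (∀ i : Fin (n+1), A i) → ℝ,
        ∑ x, F x = ∑ a : A 0, ∑ y : ∀ i : Fin n, A i.succ, F (Fin.cons a y) := by
      intro F
      calc ∑ x, F x = ∑ z : A 0 × (∀ i : Fin n, A i.succ), F (Fin.cons z.1 z.2) :=
            (Fintype.sum_equiv (Fin.consEquiv A) (fun z => F (Fin.cons z.1 z.2)) F
              fun z => rfl).symm
        _ = ∑ a : A 0, ∑ y : ∀ i : Fin n, A i.succ, F (Fin.cons a y) :=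
            Fintype.sum_prod_type _
    have hw : ∀ (a : A 0) (y : ∀ i : Fin n, A i.succ),
        ∏ i, p i (Fin.cons a y i) = p 0 a * ∏ i : Fin n, p i.succ (y i) := by
      intro a y
      rw [Fin.prod_univ_succ]
      simp
    have hwB0 : ∀ y : ∀ i : Fin n, A i.succ, 0 ≤ ∏ i : Fin n, p i.succ (y i) :=
      fun y => Finset.prod_nonneg fun i _ => hp0 _ _
    -- expectation splits
    have hEfEB : ∑ x, (∏ i, p i (x i)) * f x
        = ∑ y : ∀ i : Fin n, A i.succ,
            (∏ i : Fin n, p i.succ (y i)) * ∑ a, p 0 a * f (Fin.cons a y) := by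
      rw [hre fun x => (∏ i, p i (x i)) * f x, Finset.sum_comm]
      refine Finset.sum_congr rfl fun y _ => ?_
      rw [Finset.mul_sum]
      refine Finset.sum_congr rfl fun a _ => ?_
      rw [hw]
      ring
    -- bounded differences for the averaged function
    have hfbar : ∀ (y y' : ∀ i : Fin n, A i.succ) (i : Fin n), (∀ j, j ≠ i → y j = y' j) →
        |(∑ a, p 0 a * f (Fin.cons a y)) - ∑ a, p 0 a * f (Fin.cons a y')| ≤ c := by
      intro y y' i hyy'
      rw [← Finset.sum_sub_distrib]
      have hterm : ∀ a : A 0,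
          |p 0 a * f (Fin.cons a y) - p 0 a * f (Fin.cons a y')| ≤ p 0 a * c := by
        intro a
        rw [← mul_sub, abs_mul, abs_of_nonneg (hp0 0 a)]
        refine mul_le_mul_of_nonneg_left ?_ (hp0 0 a)
        refine hf _ _ i.succ fun j hj => ?_
        rcases j.eq_zero_or_eq_succ with rfl | ⟨k, rfl⟩
        · rfl
        · simp only [Fin.cons_succ]
          exact hyy' k fun hk => hj (by rw [hk])
      calc |∑ a, (p 0 a * f (Fin.cons a y) - p 0 a * f (Fin.cons a y'))|
          ≤ ∑ a, |p 0 a * f (Fin.cons a y) - p 0 a * f (Fin.cons a y')| :=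
            Finset.abs_sum_le_sum_abs _ _
        _ ≤ ∑ a, p 0 a * c := Finset.sum_le_sum fun a _ => hterm a
        _ = c := by rw [← Finset.sum_mul, hp1 0, one_mul]
    have ihB := ih (fun i => p i.succ) (fun i a => hp0 _ _) (fun i => hp1 _)
      (fun y => ∑ a, p 0 a * f (Fin.cons a y)) c hfbar t
    -- inner Hoeffding bound for each fixed y
    have hinner : ∀ y : ∀ i : Fin n, A i.succ,
        ∑ a, p 0 a * exp (t * (f (Fin.cons a y) - ∑ a', p 0 a' * f (Fin.cons a' y)))
          ≤ exp (t ^ 2 * c ^ 2 / 8) := by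
      intro y
      refine hoeffding_fin' (p 0) (hp0 0) (hp1 0)
        (fun a => f (Fin.cons a y) - ∑ a', p 0 a' * f (Fin.cons a' y)) ?_ c t ?_
      · simp only [mul_sub]
        rw [Finset.sum_sub_distrib, ← Finset.sum_mul, hp1 0, one_mul, sub_self]
      · intro a b
        have hd := hf (Fin.cons a y) (Fin.cons b y) 0 ?_
        · have := (abs_le.1 hd).2
          linarith
        · intro j hj
          rcases j.eq_zero_or_eq_succ with rfl | ⟨k, rfl⟩
          · exact absurd rfl hj
          · simp only [Fin.cons_succ]
    -- main computation
    rw [hre fun x => (∏ i, p i (x i)) *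
      exp (t * (f x - ∑ y, (∏ i, p i (y i)) * f y)), Finset.sum_comm]
    have hstep : ∀ y : ∀ i : Fin n, A i.succ,
        ∑ a, (∏ i, p i (Fin.cons a y i)) *
            exp (t * (f (Fin.cons a y) - ∑ x, (∏ i, p i (x i)) * f x))
          = ((∏ i : Fin n, p i.succ (y i)) *
              exp (t * ((∑ a, p 0 a * f (Fin.cons a y)) -
                ∑ y' : ∀ i : Fin n, A i.succ, (∏ i : Fin n, p i.succ (y' i)) *
                  ∑ a, p 0 a * f (Fin.cons a y')))) *
            ∑ a, p 0 a * exp (t * (f (Fin.cons a y) - ∑ a', p 0 a' * f (Fin.cons a' y))) := by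
      intro y
      rw [Finset.mul_sum]
      refine Finset.sum_congr rfl fun a _ => ?_
      rw [hw, hEfEB]
      rw [show t * (f (Fin.cons a y) -
            ∑ y' : ∀ i : Fin n, A i.succ, (∏ i : Fin n, p i.succ (y' i)) *
              ∑ a', p 0 a' * f (Fin.cons a' y'))
          = t * ((∑ a', p 0 a' * f (Fin.cons a' y)) -
              ∑ y' : ∀ i : Fin n, A i.succ, (∏ i : Fin n, p i.succ (y' i)) *
                ∑ a', p 0 a' * f (Fin.cons a' y'))
            + t * (f (Fin.cons a y) - ∑ a', p 0 a' * f (Fin.cons a' y)) from by ring,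
        Real.exp_add]
      ring
    calc ∑ y : ∀ i : Fin n, A i.succ, ∑ a, (∏ i, p i (Fin.cons a y i)) *
            exp (t * (f (Fin.cons a y) - ∑ x, (∏ i, p i (x i)) * f x))
        = ∑ y : ∀ i : Fin n, A i.succ, ((∏ i : Fin n, p i.succ (y i)) *
              exp (t * ((∑ a, p 0 a * f (Fin.cons a y)) -
                ∑ y' : ∀ i : Fin n, A i.succ, (∏ i : Fin n, p i.succ (y' i)) *
                  ∑ a, p 0 a * f (Fin.cons a y')))) *
            ∑ a, p 0 a * exp (t * (f (Fin.cons a y) - ∑ a', p 0 a' * f (Fin.cons a' y))) :=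
          Finset.sum_congr rfl fun y _ => hstep y
      _ ≤ ∑ y : ∀ i : Fin n, A i.succ, ((∏ i : Fin n, p i.succ (y i)) *
              exp (t * ((∑ a, p 0 a * f (Fin.cons a y)) -
                ∑ y' : ∀ i : Fin n, A i.succ, (∏ i : Fin n, p i.succ (y' i)) *
                  ∑ a, p 0 a * f (Fin.cons a y')))) * exp (t ^ 2 * c ^ 2 / 8) :=
          Finset.sum_le_sum fun y _ => mul_le_mul_of_nonneg_left (hinner y)
            (mul_nonneg (hwB0 y) (exp_pos _).le)
      _ = (∑ y : ∀ i : Fin n, A i.succ, (∏ i : Fin n, p i.succ (y i)) *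
              exp (t * ((∑ a, p 0 a * f (Fin.cons a y)) -
                ∑ y' : ∀ i : Fin n, A i.succ, (∏ i : Fin n, p i.succ (y' i)) *
                  ∑ a, p 0 a * f (Fin.cons a y')))) * exp (t ^ 2 * c ^ 2 / 8) := by
          rw [Finset.sum_mul]
      _ ≤ exp (t ^ 2 * c ^ 2 * n / 8) * exp (t ^ 2 * c ^ 2 / 8) :=
          mul_le_mul_of_nonneg_right ihB (exp_pos _).le
      _ = exp (t ^ 2 * c ^ 2 * (n + 1 : ℕ) / 8) := by
          rw [← Real.exp_add]
          congr 1
          push_cast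
          ring

lemma tail_bound {ι : Type*} [Fintype ι] (w : ι → ℝ) (hw0 : ∀ x, 0 ≤ w x)
    (g : ι → ℝ) (t M m : ℝ) (ht : 0 ≤ t)
    (hM : ∑ x, w x * exp (t * g x) ≤ M) :
    ∑ x ∈ univ.filter (fun x => m ≤ g x), w x ≤ exp (-(t * m)) * M := by
  have h1 : ∀ x ∈ univ.filter (fun x => m ≤ g x), w x ≤ exp (-(t * m)) * (w x * exp (t * g x)) := by
    intro x hx
    rw [mem_filter] at hx
    have h2 : exp (t * m) ≤ exp (t * g x) := exp_le_exp.2 (mul_le_mul_of_nonneg_left hx.2 ht)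
    have h3 : 1 ≤ exp (-(t * m)) * exp (t * g x) := by
      rw [← Real.exp_add]
      have : (0:ℝ) ≤ -(t * m) + t * g x := by nlinarith [mul_le_mul_of_nonneg_left hx.2 ht]
      calc (1:ℝ) = exp 0 := exp_zero.symm
        _ ≤ _ := exp_le_exp.2 this
    calc w x = w x * 1 := (mul_one _).symm
      _ ≤ w x * (exp (-(t * m)) * exp (t * g x)) := mul_le_mul_of_nonneg_left h3 (hw0 x)
      _ = exp (-(t * m)) * (w x * exp (t * g x)) := by ring
  calc ∑ x ∈ univ.filter (fun x => m ≤ g x), w x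
      ≤ ∑ x ∈ univ.filter (fun x => m ≤ g x), exp (-(t * m)) * (w x * exp (t * g x)) :=
        Finset.sum_le_sum h1
    _ ≤ ∑ x, exp (-(t * m)) * (w x * exp (t * g x)) := by
        refine Finset.sum_le_sum_of_subset_of_nonneg (Finset.filter_subset _ _) fun x _ _ => ?_
        exact mul_nonneg (exp_pos _).le (mul_nonneg (hw0 x) (exp_pos _).le)
    _ = exp (-(t * m)) * ∑ x, w x * exp (t * g x) := by rw [Finset.mul_sum]
    _ ≤ exp (-(t * m)) * M := mul_le_mul_of_nonneg_left hM (exp_pos _).le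

/-- **McDiarmid's inequality.** Let `X 0, …, X (n−1)` be independent random
variables, `X i` taking values in a finite set `A i`, and let `f` satisfy the bounded
differences condition with constant `c > 0`. Then for every `m ≥ 0`,
`Pr(f(X) − E[f(X)] ≥ m) ≤ 2·exp(−2m²/(c²n))`. -/
theorem stmt18 {Ω : Type*} [MeasurableSpace Ω] (μ : Measure Ω) [IsProbabilityMeasure μ]
    {n : ℕ} {A : Fin n → Type*} [∀ i, Fintype (A i)]
    [∀ i, MeasurableSpace (A i)] [∀ i, MeasurableSingletonClass (A i)]
    (X : ∀ i : Fin n, Ω → A i) (hX : ∀ i, Measurable (X i))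
    (hindep : iIndepFun X μ)
    (f : (∀ i, A i) → ℝ) (c : ℝ) (hc : 0 < c)
    (hf : ∀ (x x' : ∀ i, A i) (i : Fin n), (∀ j, j ≠ i → x j = x' j) →
      |f x - f x'| ≤ c)
    (m : ℝ) (hm : 0 ≤ m) :
    (μ {ω : Ω | m ≤ f (fun i => X i ω) - μ[fun ω => f (fun i => X i ω)]}).toReal ≤
      2 * Real.exp (-2 * m ^ 2 / (c ^ 2 * n)) := by
  rcases Nat.eq_zero_or_pos n with hn | hn
  · subst hn
    have h1 : (μ {ω : Ω | m ≤ f (fun i => X i ω) - μ[fun ω => f (fun i => X i ω)]}).toReal ≤ 1 := by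
      rw [← ENNReal.toReal_one]
      exact ENNReal.toReal_mono ENNReal.one_ne_top prob_le_one
    have h2 : (2 : ℝ) * Real.exp (-2 * m ^ 2 / (c ^ 2 * (0:ℕ))) = 2 := by
      norm_num
    rw [h2]
    linarith
  -- main case
  set Y : Ω → ∀ i, A i := fun ω i => X i ω with hYdef
  have hY : Measurable Y := measurable_pi_lambda _ hX
  have hsing : ∀ x : ∀ i, A i, MeasurableSet {x} := by
    intro x
    have hxe : {x} = ⋂ i, (fun z : ∀ i, A i => z i) ⁻¹' {x i} := by
      ext z
      simp [funext_iff]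
    rw [hxe]
    exact MeasurableSet.iInter fun i => measurable_pi_apply i (measurableSet_singleton _)
  letI : MeasurableSingletonClass (∀ i, A i) := ⟨hsing⟩
  have hfm : Measurable f := measurable_of_countable f
  set ν : Measure (∀ i, A i) := μ.map Y with hνdef
  haveI : IsProbabilityMeasure ν := Measure.isProbabilityMeasure_map hY.aemeasurable
  set p : ∀ i, A i → ℝ := fun i a => (μ (X i ⁻¹' {a})).toReal with hpdef
  have hp0 : ∀ i a, 0 ≤ p i a := fun i a => ENNReal.toReal_nonneg
  have hp1 : ∀ i, ∑ a, p i a = 1 := by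
    intro i
    have hdisj : ((univ : Finset (A i)) : Set (A i)).Pairwise (Function.onFun Disjoint fun a => X i ⁻¹' {a}) := by
      intro a _ b _ hab
      simp only [Function.onFun, Set.disjoint_left]
      intro ω h1 h2
      exact hab (h1.symm.trans h2)
    have h1 : ∑ a, μ (X i ⁻¹' {a}) = μ (⋃ a ∈ (univ : Finset (A i)), X i ⁻¹' {a}) :=
      (measure_biUnion_finset hdisj fun a _ => hX i (measurableSet_singleton a)).symm
    have h2 : (⋃ a ∈ (univ : Finset (A i)), X i ⁻¹' {a}) = Set.univ := by
      ext ω; simp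
    rw [h2, measure_univ] at h1
    rw [hpdef]
    rw [← ENNReal.toReal_sum fun a _ => measure_ne_top μ _, h1, ENNReal.toReal_one]
  have hw : ∀ x : ∀ i, A i, (ν {x}).toReal = ∏ i, p i (x i) := by
    intro x
    rw [hνdef, Measure.map_apply hY (hsing x)]
    have hpre : Y ⁻¹' {x} = ⋂ i ∈ (univ : Finset (Fin n)), X i ⁻¹' {x i} := by
      ext ω
      simp [hYdef, funext_iff]
    rw [hpre, hindep.measure_inter_preimage_eq_mul univ fun i _ => measurableSet_singleton (x i),
      ENNReal.toReal_prod]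
  -- expectation
  have hEf : μ[fun ω => f (Y ω)] = ∑ x, (∏ i, p i (x i)) * f x := by
    have h1 : μ[fun ω => f (Y ω)] = ∫ x, f x ∂ν := by
      rw [hνdef, integral_map hY.aemeasurable hfm.aestronglyMeasurable]
    rw [h1, integral_fintype .of_finite]
    refine Finset.sum_congr rfl fun x _ => ?_
    rw [smul_eq_mul, measureReal_def, hw]
  -- tail set
  set Ef : ℝ := ∑ x, (∏ i, p i (x i)) * f x with hEfdef
  set S : Set (∀ i, A i) := {x | m ≤ f x - Ef} with hSdef
  have hSm : MeasurableSet S := (Set.toFinite S).measurableSet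
  have hset : {ω : Ω | m ≤ f (fun i => X i ω) - μ[fun ω => f (fun i => X i ω)]} = Y ⁻¹' S := by
    ext ω
    simp only [Set.mem_setOf_eq, Set.mem_preimage, hSdef, hYdef]
    rw [hEf]
  have hmeas : μ {ω : Ω | m ≤ f (fun i => X i ω) - μ[fun ω => f (fun i => X i ω)]} = ν S := by
    rw [hset, hνdef, Measure.map_apply hY hSm]
  have hsum : (ν S).toReal = ∑ x ∈ univ.filter (fun x => m ≤ f x - Ef), (ν {x}).toReal := by
    have hScoe : S = ⋃ x ∈ univ.filter (fun x => m ≤ f x - Ef), {x} := by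
      ext z
      simp [hSdef]
    have hdisj : (((univ.filter (fun x => m ≤ f x - Ef)) : Finset (∀ i, A i)) : Set (∀ i, A i)).Pairwise
        (Function.onFun Disjoint fun x : ∀ i, A i => ({x} : Set (∀ i, A i))) := by
      intro a _ b _ hab
      simp only [Function.onFun]
      exact Set.disjoint_singleton.2 hab
    rw [hScoe, measure_biUnion_finset hdisj fun x _ => hsing x,
      ENNReal.toReal_sum fun x _ => measure_ne_top ν _]
  -- Chernoff
  set t : ℝ := 4 * m / (c ^ 2 * n) with htdef
  have htpos : 0 ≤ t := by
    apply div_nonneg (by linarith)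
    positivity
  have hmgf := mcdiarmid_mgf' n p hp0 hp1 f c hf t
  have htail := tail_bound (fun x => (ν {x}).toReal) (fun x => ENNReal.toReal_nonneg)
    (fun x => f x - Ef) t (exp (t ^ 2 * c ^ 2 * n / 8)) m htpos ?_
  swap
  · calc ∑ x, (ν {x}).toReal * exp (t * (f x - Ef))
        = ∑ x, (∏ i, p i (x i)) * exp (t * (f x - ∑ y, (∏ i, p i (y i)) * f y)) := by
          refine Finset.sum_congr rfl fun x _ => ?_
          rw [hw, hEfdef]
      _ ≤ exp (t ^ 2 * c ^ 2 * n / 8) := hmgf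
  have hexpeq : exp (-(t * m)) * exp (t ^ 2 * c ^ 2 * n / 8)
      = exp (-2 * m ^ 2 / (c ^ 2 * n)) := by
    rw [← Real.exp_add]
    congr 1
    rw [htdef]
    have hcn : (c ^ 2 * (n:ℝ)) ≠ 0 := by positivity
    field_simp
    ring
  calc (μ {ω : Ω | m ≤ f (fun i => X i ω) - μ[fun ω => f (fun i => X i ω)]}).toReal
      = (ν S).toReal := by rw [hmeas]
    _ = ∑ x ∈ univ.filter (fun x => m ≤ f x - Ef), (ν {x}).toReal := hsum
    _ ≤ exp (-(t * m)) * exp (t ^ 2 * c ^ 2 * n / 8) := htail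
    _ = exp (-2 * m ^ 2 / (c ^ 2 * n)) := hexpeq
    _ ≤ 2 * exp (-2 * m ^ 2 / (c ^ 2 * n)) := by nlinarith [exp_pos (-2 * m ^ 2 / (c ^ 2 * (n:ℝ)))]
end
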